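/- Let U be an n×n complex unitary matrix such that the kernel of I − U is one-dimensional; let a be a unit vector with U a = a, and let (a = a_1, a_2, …, a_n) be an orthonormal basis of eigenvectors of U with eigenvalues (1 = λ_1, λ_2, …, λ_n), where λ_j ≠ 1 for all j ≥ 2. Then adj(I − U) = ( Π_{j=2}^n (1 − λ_j) ) · a a^*, and consequently trace(adj(I − U)) = Π_{j=2}^n (1 − λ_j) ≠ 0. -/

import Mathlib

open scoped Matrix


/-- If `U` is unitary with one-dimensional kernel of `1 - U`, `a` a unit eigenvector with
eigenvalue `1`, and `b` an orthonormal eigenbasis with eigenvalues `lam`, where `b j₀ = a`,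
`lam j₀ = 1`, and `lam j ≠ 1` for `j ≠ j₀`, then
`adj(1 - U) = (∏_{j ≠ j₀} (1 - lam j)) • a a^*` and
`trace (adj (1 - U)) = ∏_{j ≠ j₀} (1 - lam j) ≠ 0`. -/
theorem stmt2 {n : ℕ} (U : Matrix (Fin n) (Fin n) ℂ)
    (hU : U ∈ Matrix.unitaryGroup (Fin n) ℂ)
    (hker : Module.finrank ℂ (LinearMap.ker (1 - U).mulVecLin) = 1)
    (a : Fin n → ℂ) (ha : dotProduct (star a) a = 1) (haU : U.mulVec a = a)
    (b : Fin n → (Fin n → ℂ)) (lam : Fin n → ℂ) (j₀ : Fin n)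
    (horth : ∀ i j, dotProduct (star (b i)) (b j) = if i = j then 1 else 0)
    (heig : ∀ j, U.mulVec (b j) = lam j • b j)
    (hb : b j₀ = a) (hl : lam j₀ = 1)
    (hl' : ∀ j, j ≠ j₀ → lam j ≠ 1) :
    (1 - U).adjugate =
        (∏ j ∈ Finset.univ.erase j₀, (1 - lam j)) • Matrix.vecMulVec a (star a) ∧
      (1 - U).adjugate.trace = ∏ j ∈ Finset.univ.erase j₀, (1 - lam j) ∧
      (∏ j ∈ Finset.univ.erase j₀, (1 - lam j)) ≠ 0 := by
  classical
  set c : ℂ := ∏ j ∈ Finset.univ.erase j₀, (1 - lam j) with hc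
  set B : Matrix (Fin n) (Fin n) ℂ := Matrix.of (fun i j => b j i) with hBdef
  have hBB : Bᴴ * B = 1 := by
    ext i j
    have := horth i j
    simpa [Matrix.mul_apply, Matrix.conjTranspose_apply, dotProduct,
      Matrix.one_apply, hBdef] using this
  have hBB' : B * Bᴴ = 1 := mul_eq_one_comm.mp hBB
  set D : Matrix (Fin n) (Fin n) ℂ := Matrix.diagonal (fun j => 1 - lam j) with hDdef
  have hdecomp : 1 - U = B * D * Bᴴ := by
    have h1 : (1 - U) * B = B * D := by
      ext i j
      have heq : (U.mulVec (b j)) i = lam j * b j i := by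
        rw [heig j]; simp
      have hUB : (U * B) i j = (U.mulVec (b j)) i := by
        simp [Matrix.mul_apply, Matrix.mulVec, dotProduct, hBdef]
      have hBD : (B * D) i j = b j i * (1 - lam j) := by
        simp [hDdef, Matrix.mul_diagonal, hBdef]
      rw [Matrix.sub_mul, Matrix.one_mul, Matrix.sub_apply, hUB, heq, hBD]
      simp [hBdef]
      ring
    calc 1 - U = (1 - U) * (B * Bᴴ) := by rw [hBB', Matrix.mul_one]
      _ = ((1 - U) * B) * Bᴴ := by rw [Matrix.mul_assoc]
      _ = B * D * Bᴴ := by rw [h1]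
  have hadjB : B.adjugate = B.det • Bᴴ := by
    calc B.adjugate = B.adjugate * (B * Bᴴ) := by rw [hBB', Matrix.mul_one]
      _ = (B.adjugate * B) * Bᴴ := by rw [Matrix.mul_assoc]
      _ = B.det • Bᴴ := by rw [Matrix.adjugate_mul, Matrix.smul_mul, Matrix.one_mul]
  have hadjBH : Bᴴ.adjugate = Bᴴ.det • B := by
    calc Bᴴ.adjugate = Bᴴ.adjugate * (Bᴴ * B) := by rw [hBB, Matrix.mul_one]
      _ = (Bᴴ.adjugate * Bᴴ) * B := by rw [Matrix.mul_assoc]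
      _ = Bᴴ.det • B := by rw [Matrix.adjugate_mul, Matrix.smul_mul, Matrix.one_mul]
  have hdet : Bᴴ.det * B.det = 1 := by
    rw [← Matrix.det_mul, hBB, Matrix.det_one]
  have hadj : (1 - U).adjugate = B * D.adjugate * Bᴴ := by
    rw [hdecomp, Matrix.adjugate_mul_distrib, Matrix.adjugate_mul_distrib,
      hadjB, hadjBH]
    simp only [Matrix.smul_mul, Matrix.mul_smul, smul_smul, Matrix.mul_assoc]
    rw [mul_comm, hdet, one_smul]
  have hDadj : D.adjugate = Matrix.diagonal (fun i => ∏ j ∈ Finset.univ.erase i, (1 - lam j)) := by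
    rw [hDdef, Matrix.adjugate_diagonal]
  have hw : ∀ i, (∏ j ∈ Finset.univ.erase i, (1 - lam j)) = if i = j₀ then c else 0 := by
    intro i
    by_cases hi : i = j₀
    · simp [hi, hc]
    · rw [if_neg hi]
      apply Finset.prod_eq_zero (i := j₀)
      · exact Finset.mem_erase.mpr ⟨fun h => hi h.symm, Finset.mem_univ _⟩
      · rw [hl]; ring
  have hmain : (1 - U).adjugate = c • Matrix.vecMulVec a (star a) := by
    rw [hadj, hDadj]
    ext p q
    rw [Matrix.mul_apply]
    have : ∀ k, (B * Matrix.diagonal fun i => ∏ j ∈ Finset.univ.erase i, (1 - lam j)) p k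
        * Bᴴ k q = (if k = j₀ then c else 0) * (b k p * star (b k q)) := by
      intro k
      rw [Matrix.mul_diagonal, hw k]
      simp [hBdef, Matrix.conjTranspose_apply]
      ring
    rw [Finset.sum_congr rfl fun k _ => this k]
    rw [Finset.sum_eq_single j₀]
    · simp [hb, Matrix.vecMulVec_apply]
      try ring
    · intro k _ hk; simp [hk]
    · intro h; exact absurd (Finset.mem_univ j₀) h
  have htr : (Matrix.vecMulVec a (star a)).trace = 1 := by
    rw [Matrix.trace]
    have : ∀ p, (Matrix.vecMulVec a (star a)).diag p = star (a p) * a p := by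
      intro p; simp [Matrix.vecMulVec_apply, Matrix.diag]; ring
    rw [Finset.sum_congr rfl fun p _ => this p]
    simpa [dotProduct] using ha
  have hne : c ≠ 0 := by
    rw [hc]
    apply Finset.prod_ne_zero_iff.mpr
    intro j hj
    have := hl' j (Finset.mem_erase.mp hj).1
    exact sub_ne_zero.mpr fun h => this h.symm
  refine ⟨hmain, ?_, hne⟩
  rw [hmain, Matrix.trace_smul, htr, smul_eq_mul, mul_one]
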